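/- For n sufficiently large relative to k and r (with k, r ≥ 2), the spectral radius of the graph K_{k−1} ∨ T_{n−k+1,r} is at least (r−1)n/r + 2(k−1)/r − (1/n)·( (k−1)(r+k−1)/r + r/2 ). -/

import Mathlib

/-- The join of two graphs: all vertices of `G` are joined to all vertices of `H`. -/
def graphJoin {α β : Type*} (G : SimpleGraph α) (H : SimpleGraph β) : SimpleGraph (α ⊕ β) where
  Adj x y :=
    match x, y with
    | Sum.inl a, Sum.inl b => G.Adj a b
    | Sum.inl _, Sum.inr _ => True
    | Sum.inr _, Sum.inl _ => True
    | Sum.inr a, Sum.inr b => H.Adj a b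
  symm := by
    constructor
    rintro (a | a) (b | b) h <;> simp_all
    · exact h.symm
    · exact h.symm
  loopless := by
    constructor
    rintro (a | a) h
    · exact G.loopless.irrefl a h
    · exact H.loopless.irrefl a h

/-- The number of edges of a graph. -/
noncomputable def numEdges {V : Type*} (G : SimpleGraph V) : ℕ := G.edgeSet.ncard

/-- The spectral radius of a finite simple graph: the largest eigenvalue (supremum of the
real spectrum) of its adjacency matrix. -/
noncomputable def specRad {V : Type*} [Fintype V] [DecidableEq V] (G : SimpleGraph V) : ℝ := by
  classical exact sSup (spectrum ℝ (SimpleGraph.adjMatrix ℝ G))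


lemma rayleigh_le_specRad {V : Type*} [Fintype V] [DecidableEq V] [Nonempty V]
    (G : SimpleGraph V) [DecidableRel G.Adj] :
    (∑ u : V, ∑ v : V, if G.Adj u v then (1:ℝ) else 0) / (Fintype.card V : ℝ) ≤
      sSup (spectrum ℝ (SimpleGraph.adjMatrix ℝ G)) := by
  classical
  set A := SimpleGraph.adjMatrix ℝ G with hAdef
  have hA : A.IsHermitian := by
    unfold Matrix.IsHermitian
    ext i j
    simp [A, Matrix.conjTranspose_apply, SimpleGraph.adjMatrix_apply, G.adj_comm]
  set T := Matrix.toEuclideanLin A with hT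
  have hSym : T.IsSymmetric := Matrix.isHermitian_iff_isSymmetric.mp hA
  set μ : ℝ := ⨆ x : {x : EuclideanSpace ℝ V // x ≠ 0},
      RCLike.re (inner ℝ (T x) (x : EuclideanSpace ℝ V) : ℝ) / ‖(x : EuclideanSpace ℝ V)‖ ^ 2 with hμ
  have hev : Module.End.HasEigenvalue T μ := hSym.hasEigenvalue_iSup_of_finiteDimensional
  have hmem : μ ∈ spectrum ℝ A := by
    rw [← Matrix.spectrum_toEuclideanLin]
    exact Module.End.hasEigenvalue_iff_mem_spectrum.mp hev
  have hbdd : BddAbove (spectrum ℝ A) := (Matrix.finite_spectrum A).bddAbove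
  have hle : μ ≤ sSup (spectrum ℝ A) := le_csSup hbdd hmem
  refine le_trans ?_ hle
  set x₀ : EuclideanSpace ℝ V := (WithLp.equiv 2 (V → ℝ)).symm (fun _ => 1) with hx₀def
  have hx₀ : x₀ ≠ 0 := by
    intro h
    have := congrFun (congrArg (WithLp.equiv 2 (V → ℝ)) h) (Classical.arbitrary V)
    simp [x₀] at this
  set T' := LinearMap.toContinuousLinearMap T with hT'
  have hbdd2 : BddAbove (Set.range (fun (x : {x : EuclideanSpace ℝ V // x ≠ 0}) =>
      RCLike.re (inner ℝ (T x) (x : EuclideanSpace ℝ V) : ℝ) / ‖(x : EuclideanSpace ℝ V)‖ ^ 2)) := by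
    refine ⟨‖T'‖, ?_⟩
    rintro _ ⟨x, rfl⟩
    dsimp only
    have hx2 : (0:ℝ) < ‖(x : EuclideanSpace ℝ V)‖^2 :=
      pow_pos (norm_pos_iff.mpr x.2) 2
    rw [div_le_iff₀ hx2]
    have h2 : (inner ℝ (T (x : EuclideanSpace ℝ V)) (x : EuclideanSpace ℝ V) : ℝ) ≤
        ‖T (x : EuclideanSpace ℝ V)‖ * ‖(x : EuclideanSpace ℝ V)‖ := real_inner_le_norm _ _
    have h3 : ‖T (x : EuclideanSpace ℝ V)‖ ≤ ‖T'‖ * ‖(x : EuclideanSpace ℝ V)‖ := by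
      simpa [T'] using T'.le_opNorm (x : EuclideanSpace ℝ V)
    calc RCLike.re (inner ℝ (T (x : EuclideanSpace ℝ V)) (x : EuclideanSpace ℝ V) : ℝ)
        = (inner ℝ (T (x : EuclideanSpace ℝ V)) (x : EuclideanSpace ℝ V) : ℝ) := rfl
      _ ≤ ‖T (x : EuclideanSpace ℝ V)‖ * ‖(x : EuclideanSpace ℝ V)‖ := h2
      _ ≤ (‖T'‖ * ‖(x : EuclideanSpace ℝ V)‖) * ‖(x : EuclideanSpace ℝ V)‖ :=
          mul_le_mul_of_nonneg_right h3 (norm_nonneg _)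
      _ = ‖T'‖ * ‖(x : EuclideanSpace ℝ V)‖^2 := by ring
  have key : RCLike.re (inner ℝ (T x₀) x₀ : ℝ) / ‖x₀‖ ^ 2 ≤ μ := le_ciSup hbdd2 ⟨x₀, hx₀⟩
  refine le_trans (le_of_eq ?_) key
  have hTx : (inner ℝ (T x₀) x₀ : ℝ) = ∑ u : V, ∑ v : V, if G.Adj u v then (1:ℝ) else 0 := by
    rw [hT, hx₀def, WithLp.equiv_symm_apply, Matrix.toEuclideanLin_apply_piLp_toLp]
    rw [PiLp.inner_apply]
    simp [Matrix.mulVec, dotProduct, A]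
  have hnorm : ‖x₀‖ ^ 2 = (Fintype.card V : ℝ) := by
    rw [← real_inner_self_eq_norm_sq, PiLp.inner_apply]
    simp [x₀]
  rw [hnorm, hTx]
  rfl


lemma turan_sum_le (m r : ℕ) (hr : 0 < r) :
    (∑ i : Fin m, ∑ j : Fin m, if (i : ℕ) % r = (j : ℕ) % r then (1:ℝ) else 0)
      ≤ (m:ℝ)^2 / r + (r:ℝ) / 4 := by
  classical
  set q := m / r with hq
  set s := m % r with hsdef
  have hs : s < r := Nat.mod_lt _ hr
  have hm : q * r + s = m := by have h1 := Nat.mod_add_div m r; have h2 : q * r = r * (m / r) := Nat.mul_comm _ _; omega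
  set N : ℕ → ℕ := fun c => ((Finset.range m).filter (fun i => i % r = c)).card with hNdef
  have hN : ∀ c < r, N c = q + if c < s then 1 else 0 := by
    intro c hc
    have h1 := Nat.count_modEq_card m hr c
    rw [Nat.count_eq_card_filter_range] at h1
    have h2 : ((Finset.range m).filter (fun i => i ≡ c [MOD r])).card = N c := by
      congr 1
      apply Finset.filter_congr
      intro i _
      simp only [Nat.ModEq, Nat.mod_eq_of_lt hc, eq_iff_iff]
    rw [h2, Nat.mod_eq_of_lt hc] at h1
    exact h1
  have inner_eq : ∀ c : ℕ, (∑ j : Fin m, if c % r = (j : ℕ) % r then (1:ℝ) else 0)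
      = (N (c % r) : ℝ) := by
    intro c
    rw [Fin.sum_univ_eq_sum_range (fun j => if c % r = j % r then (1:ℝ) else 0) m]
    rw [hNdef]
    rw [Finset.sum_boole]
    congr 2
    apply Finset.filter_congr
    intro i _
    simp [eq_comm]
  have step1 : (∑ i : Fin m, ∑ j : Fin m, if (i : ℕ) % r = (j : ℕ) % r then (1:ℝ) else 0)
      = ∑ i ∈ Finset.range m, (N (i % r) : ℝ) := by
    rw [Fin.sum_univ_eq_sum_range
      (fun i => ∑ j : Fin m, if i % r = (j : ℕ) % r then (1:ℝ) else 0) m]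
    exact Finset.sum_congr rfl (fun i _ => inner_eq i)
  have step2 : (∑ i ∈ Finset.range m, (N (i % r) : ℝ)) = ∑ c ∈ Finset.range r, (N c : ℝ)^2 := by
    have := Finset.sum_fiberwise_eq_sum_filter (Finset.range m) (Finset.range r)
      (fun i => i % r) (fun i => (N (i % r) : ℝ))
    have hfil : (Finset.range m).filter (fun i => i % r ∈ Finset.range r) = Finset.range m := by
      apply Finset.filter_true_of_mem
      intro i _
      exact Finset.mem_range.mpr (Nat.mod_lt _ hr)
    rw [hfil] at this
    rw [← this]
    apply Finset.sum_congr rfl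
    intro c _
    have : ∀ i ∈ (Finset.range m).filter (fun i => i % r = c), (N (i % r) : ℝ) = (N c : ℝ) := by
      intro i hi
      rw [(Finset.mem_filter.mp hi).2]
    rw [Finset.sum_congr rfl this, Finset.sum_const]
    have : ((Finset.range m).filter (fun i => i % r = c)).card = N c := rfl
    rw [this, nsmul_eq_mul, sq]
  have step3 : (∑ c ∈ Finset.range r, (N c : ℝ)^2)
      = r * (q:ℝ)^2 + (2*q+1) * s := by
    have : ∀ c ∈ Finset.range r, (N c : ℝ)^2
        = (q:ℝ)^2 + (2*(q:ℝ)+1) * (if c < s then (1:ℝ) else 0) := by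
      intro c hc
      rw [hN c (Finset.mem_range.mp hc)]
      by_cases h : c < s <;> simp [h] <;> ring
    rw [Finset.sum_congr rfl this, Finset.sum_add_distrib, Finset.sum_const,
      ← Finset.mul_sum, Finset.sum_boole]
    have : (Finset.range r).filter (fun c => c < s) = Finset.range s := by
      ext c
      simp only [Finset.mem_filter, Finset.mem_range]
      omega
    rw [this]
    simp [Finset.card_range, nsmul_eq_mul]
  rw [step1, step2, step3]
  have hr0 : (0:ℝ) < r := by exact_mod_cast hr
  have hmr : (m:ℝ) = (q:ℝ) * r + s := by exact_mod_cast hm.symm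
  rw [div_add_div _ _ (ne_of_gt hr0) (by norm_num : (4:ℝ) ≠ 0), le_div_iff₀ (by positivity)]
  nlinarith [sq_nonneg (2*(s:ℝ) - r), hr0, sq_nonneg ((q:ℝ))]

/-- For `k, r ≥ 2` and `n` sufficiently large,
`ρ(K_{k-1} ∨ T_{n-k+1,r}) ≥ (r-1)n/r + 2(k-1)/r - (1/n)((k-1)(r+k-1)/r + r/2)`. -/
theorem stmt_12 (k r : ℕ) (hk : 2 ≤ k) (hr : 2 ≤ r) :
    ∃ N : ℕ, ∀ n : ℕ, N ≤ n →
      specRad (graphJoin (SimpleGraph.completeGraph (Fin (k - 1))) (SimpleGraph.turanGraph (n - k + 1) r)) ≥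
        ((r : ℝ) - 1) * n / r + 2 * ((k : ℝ) - 1) / r -
          (1 / (n : ℝ)) * (((k : ℝ) - 1) * ((r : ℝ) + (k : ℝ) - 1) / r + (r : ℝ) / 2) := by
  classical
  refine ⟨k, fun n hn => ?_⟩
  have hrpos : 0 < r := by omega
  set t := k - 1 with ht
  set m := n - k + 1 with hmdef
  have htm : t + m = n := by omega
  have ht1 : 1 ≤ t := by omega
  haveI : Nonempty (Fin t ⊕ Fin m) := ⟨Sum.inl ⟨0, by omega⟩⟩
  set G := graphJoin (SimpleGraph.completeGraph (Fin t)) (SimpleGraph.turanGraph m r) with hG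
  haveI : DecidableRel G.Adj := Classical.decRel _
  -- bridge specRad to sSup
  have hspec : sSup (spectrum ℝ (SimpleGraph.adjMatrix ℝ G)) = specRad G := by
    unfold specRad
    congr!
  have hray := rayleigh_le_specRad G
  rw [hspec] at hray
  have hcard : (Fintype.card (Fin t ⊕ Fin m) : ℝ) = (n : ℝ) := by
    rw [Fintype.card_sum, Fintype.card_fin, Fintype.card_fin]
    exact_mod_cast congrArg Nat.cast htm
  rw [hcard] at hray
  -- adjacency facts
  have adj_ll : ∀ a b : Fin t, G.Adj (Sum.inl a) (Sum.inl b) ↔ a ≠ b := fun a b => Iff.rfl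
  have adj_lr : ∀ (a : Fin t) (j : Fin m), G.Adj (Sum.inl a) (Sum.inr j) ↔ True :=
    fun a j => Iff.rfl
  have adj_rl : ∀ (i : Fin m) (b : Fin t), G.Adj (Sum.inr i) (Sum.inl b) ↔ True :=
    fun i b => Iff.rfl
  have adj_rr : ∀ i j : Fin m, G.Adj (Sum.inr i) (Sum.inr j) ↔ (i : ℕ) % r ≠ (j : ℕ) % r :=
    fun i j => Iff.rfl
  -- compute the sum
  set S := ∑ u : Fin t ⊕ Fin m, ∑ v : Fin t ⊕ Fin m, if G.Adj u v then (1:ℝ) else 0 with hS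
  set C := ∑ i : Fin m, ∑ j : Fin m, if (i : ℕ) % r = (j : ℕ) % r then (1:ℝ) else 0 with hC
  have hSval : S = ((t:ℝ)^2 - t) + (t:ℝ)*m + (m:ℝ)*t + ((m:ℝ)^2 - C) := by
    rw [hS, Fintype.sum_sum_type]
    have h1 : ∀ a : Fin t, (∑ v : Fin t ⊕ Fin m, if G.Adj (Sum.inl a) v then (1:ℝ) else 0)
        = ((t:ℝ) - 1) + m := by
      intro a
      rw [Fintype.sum_sum_type]
      have e1 : (∑ b : Fin t, if G.Adj (Sum.inl a) (Sum.inl b) then (1:ℝ) else 0)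
          = (t:ℝ) - 1 := by
        have : ∀ b : Fin t, (if G.Adj (Sum.inl a) (Sum.inl b) then (1:ℝ) else 0)
            = 1 - (if a = b then (1:ℝ) else 0) := by
          intro b
          by_cases h : a = b <;> simp [adj_ll, h]
        rw [Finset.sum_congr rfl (fun b _ => this b), Finset.sum_sub_distrib]
        simp
      have e2 : (∑ j : Fin m, if G.Adj (Sum.inl a) (Sum.inr j) then (1:ℝ) else 0) = (m:ℝ) := by
        simp [adj_lr]
      rw [e1, e2]
    have h2 : ∀ i : Fin m, (∑ v : Fin t ⊕ Fin m, if G.Adj (Sum.inr i) v then (1:ℝ) else 0)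
        = (t:ℝ) + ∑ j : Fin m, if G.Adj (Sum.inr i) (Sum.inr j) then (1:ℝ) else 0 := by
      intro i
      rw [Fintype.sum_sum_type]
      congr 1
      simp [adj_rl]
    rw [Finset.sum_congr rfl (fun a _ => h1 a), Finset.sum_congr rfl (fun i _ => h2 i)]
    rw [Finset.sum_add_distrib, Finset.sum_add_distrib]
    have h3 : (∑ i : Fin m, ∑ j : Fin m, if G.Adj (Sum.inr i) (Sum.inr j) then (1:ℝ) else 0)
        = (m:ℝ)^2 - C := by
      have : ∀ i j : Fin m, (if G.Adj (Sum.inr i) (Sum.inr j) then (1:ℝ) else 0)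
          = 1 - (if (i : ℕ) % r = (j : ℕ) % r then (1:ℝ) else 0) := by
        intro i j
        by_cases h : (i : ℕ) % r = (j : ℕ) % r <;> simp [adj_rr, h]
      rw [Finset.sum_congr rfl (fun i _ =>
        Finset.sum_congr rfl (fun j _ => this i j))]
      rw [hC]
      simp [Finset.sum_sub_distrib, sq]
    rw [h3]
    simp [Finset.card_univ]
    ring
  have hClt := turan_sum_le m r hrpos
  -- final arithmetic
  have hr0 : (0:ℝ) < r := by exact_mod_cast hrpos
  have hn0 : (0:ℝ) < n := by
    have : 0 < n := by omega
    exact_mod_cast this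
  have hnr : (n:ℝ) = (t:ℝ) + m := by exact_mod_cast congrArg Nat.cast htm.symm
  have htr : (t:ℝ) = (k:ℝ) - 1 := by
    rw [ht]
    push_cast [Nat.cast_sub (by omega : 1 ≤ k)]
    ring
  have hSge : ((t:ℝ)^2 - t) + 2*(t:ℝ)*m + ((m:ℝ)^2 - ((m:ℝ)^2/r + r/4)) ≤ S := by
    rw [hSval]; nlinarith [hClt]
  have hid : (((t:ℝ)^2 - t) + 2*(t:ℝ)*m + ((m:ℝ)^2 - ((m:ℝ)^2/r + r/4)))
      - ((((r : ℝ) - 1) * n / r + 2 * ((t:ℝ)) / r -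
          (1 / (n : ℝ)) * ((t:ℝ) * ((r : ℝ) + (t:ℝ)) / r + (r : ℝ) / 2)) * n) = (r:ℝ)/4 := by
    rw [hnr]
    field_simp
    ring
  have hmain : (((r : ℝ) - 1) * n / r + 2 * ((t:ℝ)) / r -
      (1 / (n : ℝ)) * ((t:ℝ) * ((r : ℝ) + (t:ℝ)) / r + (r : ℝ) / 2)) ≤ S / n := by
    rw [le_div_iff₀ hn0]
    nlinarith [hSge, hid, hr0]
  have hfinal := le_trans hmain hray
  rw [ge_iff_le]
  convert hfinal using 2
  · rfl
  · rw [htr]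
  · rw [htr]; ring_nf
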